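/- arXiv:1608.02902 — 4 statements merged into one kernel-verified Lean document; each statement's English description precedes it below -/
import Mathlib

section
/- Let π be a permutation on k ≥ 3 objects with no fixed points (i.e., the Hamming distance between π and the identity is k). Then the vertex set [k] of the incidence graph G_π can be partitioned into three sets V₁, V₂, V₃ such that each V_i is an independent set in G_π and |V_i| ≥ ⌊k/3⌋ for each i. -/
/-- The incidence graph of a permutation `π` on `[k]`: vertices `i ≠ j` are adjacent
iff `j = π i` or `i = π j`. -/
def incidenceGraph {k : ℕ} (π : Equiv.Perm (Fin k)) : SimpleGraph (Fin k) where
  Adj i j := i ≠ j ∧ (j = π i ∨ i = π j)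
  symm := by
    constructor
    intro i j h
    rcases h with ⟨hne, hor⟩
    exact ⟨hne.symm, hor.symm⟩
  loopless := by constructor; intro i h; exact h.1 rfl

lemma match3bool : ∀ ε δ : Fin 3 → Bool, ∃ σ : Equiv.Perm (Fin 3),
    ∀ i j, (ε i).toNat + (δ (σ i)).toNat ≤ (ε j).toNat + (δ (σ j)).toNat + 1 := by decide

lemma exists_min3 (z : Fin 3 → ℕ) :
    ∃ m, (∀ i, m ≤ z i) ∧ (m = z 0 ∨ m = z 1 ∨ m = z 2) := by
  refine ⟨min (z 0) (min (z 1) (z 2)), fun i => ?_, ?_⟩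
  · fin_cases i
    · exact min_le_left _ _
    · exact le_trans (min_le_right _ _) (min_le_left _ _)
    · exact le_trans (min_le_right _ _) (min_le_right _ _)
  · rcases le_total (z 1) (z 2) with h | h <;> rcases le_total (z 0) (z 1) with h' | h' <;>
      rcases le_total (z 0) (z 2) with h'' | h'' <;>
      simp [min_def, h, h', h''] <;> omega

lemma bit_eq (z : Fin 3 → ℕ) (hz : ∀ i j, z i ≤ z j + 1) (m : ℕ) (hle : ∀ i, m ≤ z i)
    (hc : m = z 0 ∨ m = z 1 ∨ m = z 2) (i : Fin 3) : z i = m + (decide (z i ≠ m)).toNat := by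
  by_cases h : z i = m
  · simp [h]
  · rw [show (decide (z i ≠ m)) = true by simpa using h, Bool.toNat_true]
    have h0 := hz i 0; have h1 := hz i 1; have h2 := hz i 2
    have l0 := hle 0; have l1 := hle 1; have l2 := hle 2
    have := hle i
    rcases hc with h'|h'|h' <;> omega

lemma match3 (x y : Fin 3 → ℕ) (hx : ∀ i j, x i ≤ x j + 1) (hy : ∀ i j, y i ≤ y j + 1) :
    ∃ σ : Equiv.Perm (Fin 3), ∀ i j, x i + y (σ i) ≤ x j + y (σ j) + 1 := by
  obtain ⟨m, hm, hmc⟩ := exists_min3 x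
  obtain ⟨n, hn, hnc⟩ := exists_min3 y
  obtain ⟨σ, hσ⟩ := match3bool (fun i => decide (x i ≠ m)) (fun i => decide (y i ≠ n))
  refine ⟨σ, fun i j => ?_⟩
  have := hσ i j
  have h1 := bit_eq x hx m hm hmc i; have h2 := bit_eq x hx m hm hmc j
  have h3 := bit_eq y hy n hn hnc (σ i); have h4 := bit_eq y hy n hn hnc (σ j)
  omega


/-- coloring of position `j` in a cycle of length `ℓ`. -/
def col (ℓ j : ℕ) : ℕ := if j < 3 * (ℓ / 3) then j % 3 else j - 3 * (ℓ / 3) + 1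

lemma col_lt (ℓ j : ℕ) (h : j < ℓ) : col ℓ j < 3 := by unfold col; split_ifs <;> omega

lemma col_succ (ℓ j : ℕ) (h : j + 1 < ℓ) : col ℓ j ≠ col ℓ (j + 1) := by
  unfold col; split_ifs <;> omega

lemma col_last (ℓ : ℕ) (h : 2 ≤ ℓ) : col ℓ (ℓ - 1) ≠ col ℓ 0 := by
  unfold col; split_ifs <;> omega

lemma filter_range_succ_card (p : ℕ → Prop) [DecidablePred p] (n : ℕ) :
    ((Finset.range (n+1)).filter p).card
      = ((Finset.range n).filter p).card + if p n then 1 else 0 := by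
  rw [Finset.range_add_one, Finset.filter_insert]
  split_ifs with h
  · rw [Finset.card_insert_of_notMem (by simp)]
  · simp

lemma count_mod3 (q c : ℕ) (hc : c < 3) :
    ((Finset.range (3*q)).filter (fun j => j % 3 = c)).card = q := by
  induction q with
  | zero => simp
  | succ q ih =>
    rw [(by ring : 3*(q+1) = 3*q + 1 + 1 + 1), filter_range_succ_card,
      filter_range_succ_card, filter_range_succ_card, ih]
    split_ifs <;> omega

lemma count_low (ℓ c : ℕ) (hc : c < 3) :
    ((Finset.range (3*(ℓ/3))).filter (fun j => col ℓ j = c)).card = ℓ/3 := by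
  have he : (Finset.range (3*(ℓ/3))).filter (fun j => col ℓ j = c)
      = (Finset.range (3*(ℓ/3))).filter (fun j => j % 3 = c) := by
    apply Finset.filter_congr
    intro j hj
    have hj' := Finset.mem_range.mp hj
    simp only [col, if_pos hj']
  rw [he, count_mod3 (ℓ/3) c hc]

lemma count_col (ℓ c : ℕ) (hc : c < 3) :
    ((Finset.range ℓ).filter (fun j => col ℓ j = c)).card
      = ℓ/3 + (if 1 ≤ c ∧ c ≤ ℓ % 3 then 1 else 0) := by
  have h0 : ℓ = 3*(ℓ/3) ∨ ℓ = 3*(ℓ/3) + 1 ∨ ℓ = 3*(ℓ/3) + 2 := by omega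
  rcases h0 with h | h | h
  · have hr : Finset.range ℓ = Finset.range (3*(ℓ/3)) := by rw [← h]
    rw [hr, count_low ℓ c hc]
    split_ifs <;> omega
  · have hr : Finset.range ℓ = Finset.range (3*(ℓ/3) + 1) := by rw [← h]
    have h1 : col ℓ (3*(ℓ/3)) = 1 := by unfold col; split_ifs <;> omega
    rw [hr, filter_range_succ_card, count_low ℓ c hc, h1]
    split_ifs <;> omega
  · have hr : Finset.range ℓ = Finset.range (3*(ℓ/3) + 1 + 1) := by rw [← h]
    have h1 : col ℓ (3*(ℓ/3)) = 1 := by unfold col; split_ifs <;> omega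
    have h2 : col ℓ (3*(ℓ/3) + 1) = 2 := by unfold col; split_ifs <;> omega
    rw [hr, filter_range_succ_card, filter_range_succ_card, count_low ℓ c hc, h1, h2]
    split_ifs <;> omega


lemma union3_eq {α : Type*} [DecidableEq α] (A : Fin 3 → Finset α) (σ : Equiv.Perm (Fin 3)) :
    A (σ 0) ∪ A (σ 1) ∪ A (σ 2) = A 0 ∪ A 1 ∪ A 2 := by
  have h3 : ∀ c : Fin 3, c = 0 ∨ c = 1 ∨ c = 2 := by decide
  have key : ∀ (B : Fin 3 → Finset α) (x : α), x ∈ B 0 ∪ B 1 ∪ B 2 ↔ ∃ c, x ∈ B c := by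
    intro B x
    simp only [Finset.mem_union]
    constructor
    · rintro ((h | h) | h)
      exacts [⟨0, h⟩, ⟨1, h⟩, ⟨2, h⟩]
    · rintro ⟨c, h⟩
      rcases h3 c with rfl | rfl | rfl <;> tauto
  ext x
  constructor
  · intro h
    obtain ⟨c, hc⟩ := (key (fun i => A (σ i)) x).mp h
    exact (key A x).mpr ⟨σ c, hc⟩
  · intro h
    obtain ⟨c, hc⟩ := (key A x).mp h
    refine (key (fun i => A (σ i)) x).mpr ⟨σ.symm c, ?_⟩
    simpa using hc

section main
variable {k : ℕ} (π : Equiv.Perm (Fin k)) (hfix : ∀ i, π i ≠ i)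

include hfix in
lemma cycle_partition : ∀ n (s : Finset (Fin k)), s.card ≤ n → (∀ x ∈ s, π x ∈ s) →
    ∃ V : Fin 3 → Finset (Fin k),
      (∀ i j, i ≠ j → Disjoint (V i) (V j)) ∧
      (V 0 ∪ V 1 ∪ V 2 = s) ∧
      (∀ c, ∀ i ∈ V c, ∀ j ∈ V c, ¬ (incidenceGraph π).Adj i j) ∧
      (∀ i j, (V i).card ≤ (V j).card + 1) := by
  intro n
  induction n with
  | zero =>
    intro s hcard _
    have hs : s = ∅ := Finset.card_eq_zero.mp (Nat.le_zero.mp hcard)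
    exact ⟨fun _ => ∅, by simp, by simp [hs], by simp, by simp⟩
  | succ n ih =>
    intro s hcard hclosed
    rcases Finset.eq_empty_or_nonempty s with rfl | ⟨a, ha⟩
    · exact ⟨fun _ => ∅, by simp, by simp, by simp, by simp⟩
    set f : Fin k → Fin k := ⇑π with hf
    have hper : a ∈ Function.periodicPts f := by
      refine ⟨orderOf π, orderOf_pos π, ?_⟩
      show f^[orderOf π] a = a
      rw [hf, ← Equiv.Perm.coe_pow, pow_orderOf_eq_one]
      rfl
    set ℓ := Function.minimalPeriod f a with hℓ
    have hℓpos : 0 < ℓ := Function.minimalPeriod_pos_of_mem_periodicPts hper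
    have hℓa : f^[ℓ] a = a := Function.iterate_minimalPeriod
    have hℓ2 : 2 ≤ ℓ := by
      by_contra h
      have h1 : ℓ = 1 := by omega
      rw [h1] at hℓa
      exact hfix a (by simpa using hℓa)
    have hinj : ∀ m < ℓ, ∀ nn < ℓ, f^[m] a = f^[nn] a → m = nn := by
      intro m hm nn hn he
      exact Function.iterate_injOn_Iio_minimalPeriod (Set.mem_Iio.mpr hm) (Set.mem_Iio.mpr hn) he
    set t : Finset (Fin k) := (Finset.range ℓ).image (fun j => f^[j] a) with ht
    have hmemt : ∀ x, x ∈ t ↔ ∃ j, j < ℓ ∧ f^[j] a = x := by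
      intro x
      simp [ht, Finset.mem_image, Finset.mem_range]
    have htcard : t.card = ℓ := by
      rw [ht, Finset.card_image_of_injOn, Finset.card_range]
      intro m hm nn hn he
      exact hinj m (Finset.mem_range.mp hm) nn (Finset.mem_range.mp hn) he
    have hts : t ⊆ s := by
      intro x hx
      obtain ⟨j, hj, rfl⟩ := (hmemt x).mp hx
      clear hj hx
      induction j with
      | zero => exact ha
      | succ j ihj => rw [Function.iterate_succ_apply']; exact hclosed _ ihj
    have himg : t.image π = t := by
      apply Finset.eq_of_subset_of_card_le
      · intro x hx
        obtain ⟨y, hy, rfl⟩ := Finset.mem_image.mp hx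
        obtain ⟨j, hj, rfl⟩ := (hmemt y).mp hy
        have : π (f^[j] a) = f^[j+1] a := (Function.iterate_succ_apply' f j a).symm
        rw [this]
        rcases Nat.lt_or_ge (j+1) ℓ with h | h
        · exact (hmemt _).mpr ⟨j+1, h, rfl⟩
        · have : j + 1 = ℓ := by omega
          rw [this, hℓa]
          exact (hmemt a).mpr ⟨0, hℓpos, rfl⟩
      · rw [Finset.card_image_of_injective t π.injective]
    have hmemt_pi : ∀ x, π x ∈ t ↔ x ∈ t := by
      intro x
      constructor
      · intro hx
        rw [← himg] at hx
        obtain ⟨y, hy, he⟩ := Finset.mem_image.mp hx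
        rwa [← π.injective he]
      · intro hx
        rw [← himg]
        exact Finset.mem_image_of_mem _ hx
    set s' := s \ t with hs'
    have hclosed' : ∀ x ∈ s', π x ∈ s' := by
      intro x hx
      rw [hs', Finset.mem_sdiff] at hx ⊢
      exact ⟨hclosed x hx.1, fun h => hx.2 ((hmemt_pi x).mp h)⟩
    have hcard' : s'.card ≤ n := by
      rw [hs', Finset.card_sdiff_of_subset hts, htcard]
      omega
    obtain ⟨W, hWdisj, hWunion, hWindep, hWcard⟩ := ih s' hcard' hclosed'
    have h3 : ∀ c : Fin 3, c = 0 ∨ c = 1 ∨ c = 2 := by decide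
    have hWsub : ∀ c, W c ⊆ s' := by
      intro c
      rw [← hWunion]
      rcases h3 c with rfl | rfl | rfl
      · exact (Finset.subset_union_left).trans Finset.subset_union_left
      · exact (Finset.subset_union_right).trans Finset.subset_union_left
      · exact Finset.subset_union_right
    have hcross : ∀ u ∈ t, ∀ v, v ∉ t → ¬ (incidenceGraph π).Adj u v := by
      intro u hu v hv hadj
      obtain ⟨hne, h | h⟩ := hadj
      · subst h
        exact hv ((hmemt_pi u).mpr hu)
      · subst h
        exact hv ((hmemt_pi v).mp hu)
    set T : Fin 3 → Finset (Fin k) :=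
      fun c => ((Finset.range ℓ).filter (fun j => col ℓ j = c.val)).image (fun j => f^[j] a)
      with hT
    have hmemT : ∀ c x, x ∈ T c ↔ ∃ j, j < ℓ ∧ col ℓ j = c.val ∧ f^[j] a = x := by
      intro c x
      simp only [hT, Finset.mem_image, Finset.mem_filter, Finset.mem_range]
      constructor
      · rintro ⟨j, ⟨h1, h2⟩, h3⟩
        exact ⟨j, h1, h2, h3⟩
      · rintro ⟨j, h1, h2, h3⟩
        exact ⟨j, ⟨h1, h2⟩, h3⟩
    have hTt : ∀ c, T c ⊆ t := by
      intro c x hx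
      obtain ⟨j, h1, h2, rfl⟩ := (hmemT c x).mp hx
      exact (hmemt _).mpr ⟨j, h1, rfl⟩
    have hTcard : ∀ c : Fin 3,
        (T c).card = ℓ/3 + (if 1 ≤ c.val ∧ c.val ≤ ℓ % 3 then 1 else 0) := by
      intro c
      rw [hT]
      rw [Finset.card_image_of_injOn, count_col ℓ c.val c.isLt]
      intro m hm nn hn he
      have hm' := Finset.mem_range.mp (Finset.mem_filter.mp hm).1
      have hn' := Finset.mem_range.mp (Finset.mem_filter.mp hn).1
      exact hinj m hm' nn hn' he
    have hTpair : ∀ i j : Fin 3, (T i).card ≤ (T j).card + 1 := by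
      intro i j
      rw [hTcard i, hTcard j]
      split_ifs <;> omega
    have hTdisj : ∀ c d : Fin 3, c ≠ d → Disjoint (T c) (T d) := by
      intro c d hcd
      rw [Finset.disjoint_left]
      intro x hxc hxd
      obtain ⟨m, hm, hcm, rfl⟩ := (hmemT c x).mp hxc
      obtain ⟨nn, hn, hcn, he⟩ := (hmemT d _).mp hxd
      have := hinj nn hn m hm he
      subst this
      exact hcd (Fin.ext (hcm.symm.trans hcn))
    have hTindep : ∀ c : Fin 3, ∀ u ∈ T c, ∀ v ∈ T c, ¬ (incidenceGraph π).Adj u v := by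
      intro c u hu v hv hadj
      obtain ⟨m, hm, hcm, rfl⟩ := (hmemT c u).mp hu
      obtain ⟨nn, hn, hcn, rfl⟩ := (hmemT c _).mp hv
      have key : ∀ m' n' : ℕ, m' < ℓ → n' < ℓ → col ℓ m' = c.val → col ℓ n' = c.val →
          f^[n'] a = π (f^[m'] a) → False := by
        intro m' n' hm' hn' hcm' hcn' he
        have he' : f^[n'] a = f^[m'+1] a := by
          rw [Function.iterate_succ_apply']
          exact he
        rcases Nat.lt_or_ge (m'+1) ℓ with h | h
        · have := hinj n' hn' (m'+1) h he'
          subst this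
          exact col_succ ℓ m' h (hcm'.trans hcn'.symm)
        · have hml : m' + 1 = ℓ := by omega
          rw [hml, hℓa] at he'
          have h0 : n' = 0 := hinj n' hn' 0 hℓpos he'
          subst h0
          have hm1 : m' = ℓ - 1 := by omega
          subst hm1
          exact col_last ℓ hℓ2 (hcm'.trans hcn'.symm)
      obtain ⟨hne, h | h⟩ := hadj
      · exact key m nn hm hn hcm hcn h
      · exact key nn m hn hm hcn hcm h
    have hTunion : T 0 ∪ T 1 ∪ T 2 = t := by
      apply Finset.Subset.antisymm
      · intro x hx
        rcases Finset.mem_union.mp hx with h | h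
        · rcases Finset.mem_union.mp h with h | h
          · exact hTt 0 h
          · exact hTt 1 h
        · exact hTt 2 h
      · intro x hx
        obtain ⟨j, hj, rfl⟩ := (hmemt x).mp hx
        have hcol := col_lt ℓ j hj
        have hmem : f^[j] a ∈ T ⟨col ℓ j, hcol⟩ := (hmemT _ _).mpr ⟨j, hj, rfl, rfl⟩
        rcases h3 ⟨col ℓ j, hcol⟩ with h | h | h <;> rw [h] at hmem
        · exact Finset.mem_union.mpr (Or.inl (Finset.mem_union.mpr (Or.inl hmem)))
        · exact Finset.mem_union.mpr (Or.inl (Finset.mem_union.mpr (Or.inr hmem)))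
        · exact Finset.mem_union.mpr (Or.inr hmem)
    -- combine the partitions
    obtain ⟨σ, hσ⟩ := match3 (fun c => (W c).card) (fun c => (T c).card) hWcard hTpair
    have hs't : ∀ c d : Fin 3, Disjoint (W c) (T d) := by
      intro c d
      exact Finset.disjoint_of_subset_left (hWsub c)
        (Finset.disjoint_of_subset_right (hTt d) Finset.sdiff_disjoint)
    refine ⟨fun c => W c ∪ T (σ c), ?_, ?_, ?_, ?_⟩
    · intro i j hij
      rw [Finset.disjoint_union_left, Finset.disjoint_union_right, Finset.disjoint_union_right]
      exact ⟨⟨hWdisj i j hij, hs't i (σ j)⟩,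
        ⟨(hs't j (σ i)).symm, hTdisj (σ i) (σ j) (fun h => hij (σ.injective h))⟩⟩
    · have : W 0 ∪ T (σ 0) ∪ (W 1 ∪ T (σ 1)) ∪ (W 2 ∪ T (σ 2))
          = (W 0 ∪ W 1 ∪ W 2) ∪ (T (σ 0) ∪ T (σ 1) ∪ T (σ 2)) := by
        ext x
        simp only [Finset.mem_union]
        tauto
      rw [this, hWunion, union3_eq T σ, hTunion, hs']
      rw [Finset.sdiff_union_of_subset hts]
    · intro c i hi j hj hadj
      rcases Finset.mem_union.mp hi with hiW | hiT <;> rcases Finset.mem_union.mp hj with hjW | hjT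
      · exact hWindep c i hiW j hjW hadj
      · have hit : i ∉ t := (Finset.mem_sdiff.mp (hWsub c hiW)).2
        exact hcross j (hTt _ hjT) i hit hadj.symm
      · have hjt : j ∉ t := (Finset.mem_sdiff.mp (hWsub c hjW)).2
        exact hcross i (hTt _ hiT) j hjt hadj
      · exact hTindep (σ c) i hiT j hjT hadj
    · intro i j
      rw [Finset.card_union_of_disjoint (hs't i (σ i)),
        Finset.card_union_of_disjoint (hs't j (σ j))]
      exact hσ i j
end main


theorem stmt_2 (k : ℕ) (hk : 3 ≤ k) (π : Equiv.Perm (Fin k))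
    (hfix : ∀ i, π i ≠ i) :
    ∃ V₁ V₂ V₃ : Finset (Fin k),
      Disjoint V₁ V₂ ∧ Disjoint V₁ V₃ ∧ Disjoint V₂ V₃ ∧
      V₁ ∪ V₂ ∪ V₃ = Finset.univ ∧
      (∀ i ∈ V₁, ∀ j ∈ V₁, ¬ (incidenceGraph π).Adj i j) ∧
      (∀ i ∈ V₂, ∀ j ∈ V₂, ¬ (incidenceGraph π).Adj i j) ∧
      (∀ i ∈ V₃, ∀ j ∈ V₃, ¬ (incidenceGraph π).Adj i j) ∧
      k / 3 ≤ V₁.card ∧ k / 3 ≤ V₂.card ∧ k / 3 ≤ V₃.card := by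
  obtain ⟨V, hdisj, hunion, hindep, hcard⟩ :=
    cycle_partition π hfix k Finset.univ (by simp) (by simp)
  have hsum : (V 0).card + (V 1).card + (V 2).card = k := by
    have h1 : (V 0 ∪ V 1 ∪ V 2).card = k := by rw [hunion]; simp
    rw [Finset.card_union_of_disjoint, Finset.card_union_of_disjoint (hdisj 0 1 (by decide))] at h1
    · exact h1
    · rw [Finset.disjoint_union_left]
      exact ⟨hdisj 0 2 (by decide), hdisj 1 2 (by decide)⟩
  refine ⟨V 0, V 1, V 2, hdisj 0 1 (by decide), hdisj 0 2 (by decide), hdisj 1 2 (by decide),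
    hunion, hindep 0, hindep 1, hindep 2, ?_, ?_, ?_⟩ <;>
  · have h01 := hcard 0 1; have h10 := hcard 1 0; have h02 := hcard 0 2
    have h20 := hcard 2 0; have h12 := hcard 1 2; have h21 := hcard 2 1
    omega
end

section
/- For all s > 1, log(s / log s) + (log s)/s - 1 > (log s)/4. -/
noncomputable def hfaux (t : ℝ) : ℝ := t / 4 + t * Real.exp (-t) - Real.log 2

lemma hfaux_hasDeriv (x : ℝ) :
    HasDerivAt hfaux (1 / 4 + (1 - x) * Real.exp (-x)) x := by
  have h1 : HasDerivAt (fun t : ℝ => Real.exp (-t)) (-Real.exp (-x)) x := by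
    simpa using (hasDerivAt_neg x).exp
  have h2 : HasDerivAt (fun t : ℝ => t * Real.exp (-t))
      (1 * Real.exp (-x) + x * (-Real.exp (-x))) x :=
    (hasDerivAt_id x).mul h1
  have h3 : HasDerivAt (fun t : ℝ => t / 4) (1 / 4) x := by
    simpa using (hasDerivAt_id x).div_const 4
  have h4 := (h3.add h2).sub_const (Real.log 2)
  refine h4.congr_deriv ?_
  ring

lemma hfaux_mono : StrictMono hfaux := by
  apply strictMono_of_deriv_pos
  intro x
  rw [(hfaux_hasDeriv x).deriv]
  rcases le_or_gt x 1 with hx | hx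
  · have : 0 ≤ (1 - x) * Real.exp (-x) :=
      mul_nonneg (by linarith) (Real.exp_pos _).le
    linarith
  · have h1 : x - 1 ≤ Real.exp (x - 2) := by
      have := Real.add_one_le_exp (x - 2)
      linarith
    have h2 : (x - 1) * Real.exp (-x) ≤ Real.exp (-2 : ℝ) := by
      calc (x - 1) * Real.exp (-x) ≤ Real.exp (x - 2) * Real.exp (-x) := by
            exact mul_le_mul_of_nonneg_right h1 (Real.exp_pos _).le
        _ = Real.exp (-2 : ℝ) := by rw [← Real.exp_add]; ring_nf
    have h3 : Real.exp (-2 : ℝ) < 1 / 4 := by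
      rw [Real.exp_neg]
      rw [show (2 : ℝ) = 1 + 1 by norm_num, Real.exp_add]
      have := Real.exp_one_gt_d9
      rw [inv_lt_iff_one_lt_mul₀ (by positivity)]
      nlinarith
    nlinarith [Real.exp_pos (-x)]

lemma hfaux_at : hfaux (2 * Real.log 2) = 0 := by
  have h2 : Real.exp (-(2 * Real.log 2)) = 1 / 4 := by
    rw [Real.exp_neg, show (2 : ℝ) * Real.log 2 = Real.log 2 + Real.log 2 by ring,
      Real.exp_add, Real.exp_log (by norm_num : (0:ℝ) < 2)]
    norm_num
  unfold hfaux
  rw [h2]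
  ring

lemma key (t : ℝ) (ht : 0 < t) :
    t - Real.log t + t / Real.exp t - 1 > t / 4 := by
  rcases lt_or_ge (Real.exp t) 4 with h4 | h4
  · -- small case: exp t < 4
    have h1 : Real.log t ≤ t - 1 := Real.log_le_sub_one_of_pos ht
    have h2 : t / 4 < t / Real.exp t :=
      div_lt_div_of_pos_left ht (Real.exp_pos t) h4
    linarith
  · -- large case: exp t ≥ 4
    have htge : 2 * Real.log 2 ≤ t := by
      have h5 : Real.log 4 ≤ Real.log (Real.exp t) :=
        Real.log_le_log (by norm_num) h4
      rw [Real.log_exp] at h5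
      have : Real.log 4 = 2 * Real.log 2 := by
        rw [show (4 : ℝ) = 2 ^ 2 by norm_num, Real.log_pow]
        push_cast; ring
      linarith
    have hexpneg : t / Real.exp t = t * Real.exp (-t) := by
      rw [Real.exp_neg, div_eq_mul_inv]
    have htan : Real.log t ≤ t / 2 + Real.log 2 - 1 := by
      have : Real.log t = Real.log (t / 2) + Real.log 2 := by
        rw [← Real.log_mul (by positivity) (by norm_num)]
        norm_num
      have h6 : Real.log (t / 2) ≤ t / 2 - 1 :=
        Real.log_le_sub_one_of_pos (by positivity)
      linarith
    have hmono : hfaux (2 * Real.log 2) ≤ hfaux t := hfaux_mono.le_iff_le.mpr htge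
    rw [hfaux_at] at hmono
    unfold hfaux at hmono
    by_cases h2 : t = 2
    · -- at t = 2, hfaux is strictly positive since 2 > 2 log 2
      have hlt : 2 * Real.log 2 < t := by
        rw [h2]
        have := Real.log_two_lt_d9
        linarith
      have hs : hfaux (2 * Real.log 2) < hfaux t := hfaux_mono hlt
      rw [hfaux_at] at hs
      unfold hfaux at hs
      rw [hexpneg]
      linarith
    · -- strict tangent bound
      have htan' : Real.log t < t / 2 + Real.log 2 - 1 := by
        have hne : t / 2 ≠ 1 := by
          intro h; apply h2; linarith [(div_eq_one_iff_eq (by norm_num : (2:ℝ) ≠ 0)).mp h]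
        have hlogne : Real.log (t / 2) ≠ 0 := by
          intro h
          have := Real.exp_log (show (0:ℝ) < t / 2 by positivity)
          rw [h, Real.exp_zero] at this
          exact hne this.symm
        have h7 := Real.add_one_lt_exp hlogne
        rw [Real.exp_log (show (0:ℝ) < t / 2 by positivity)] at h7
        have : Real.log t = Real.log (t / 2) + Real.log 2 := by
          rw [← Real.log_mul (by positivity) (by norm_num)]
          norm_num
        linarith
      rw [hexpneg]
      linarith

theorem stmt_3 (s : ℝ) (hs : 1 < s) :
    Real.log (s / Real.log s) + Real.log s / s - 1 > Real.log s / 4 := by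
  have hs0 : 0 < s := lt_trans zero_lt_one hs
  have hlog : 0 < Real.log s := Real.log_pos hs
  have hdiv : Real.log (s / Real.log s) = Real.log s - Real.log (Real.log s) :=
    Real.log_div (ne_of_gt hs0) (ne_of_gt hlog)
  have hkey := key (Real.log s) hlog
  rw [Real.exp_log hs0] at hkey
  linarith
end

section
/- Given integers b₁, ..., b_d, construct y ∈ ℤ^{2d+1} with y_i = b_i for i ∈ [d] and y_i = 0 otherwise, and let A be the (2d+1)×(2d) integer matrix whose top 2d×2d block is the identity and whose last row is (1,...,1,-1,...,-1) with d ones followed by d minus-ones. Then there exist a permutation π of [2d+1] and a vector x ∈ ℝ^{2d} with y_{π} = A x if and only if there exists a subset S ⊆ [d] with ∑_{i∈S} b_i = ∑_{i∈[d]∖S} b_i. -/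
theorem stmt_10 (d : ℕ) (hd : 1 ≤ d) (b : Fin d → ℤ)
    (y : Fin (2 * d + 1) → ℤ)
    (A : Matrix (Fin (2 * d + 1)) (Fin (2 * d)) ℝ)
    (hy : ∀ i, y i = if h : (i : ℕ) < d then b ⟨i, h⟩ else 0)
    (hA : ∀ i j, A i j =
      if (i : ℕ) < 2 * d then (if (i : ℕ) = (j : ℕ) then 1 else 0)
      else (if (j : ℕ) < d then 1 else -1)) :
    (∃ (π : Equiv.Perm (Fin (2 * d + 1))) (x : Fin (2 * d) → ℝ),
        ∀ i, ((y (π i) : ℝ)) = ∑ j, A i j * x j) ↔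
      ∃ S : Finset (Fin d), ∑ i ∈ S, b i = ∑ i ∈ Sᶜ, b i := by
  classical
  constructor
  · rintro ⟨π, x, hx⟩
    -- rows i < 2d give x in terms of y ∘ π
    have hxval : ∀ i : Fin (2 * d + 1), ∀ h : (i : ℕ) < 2 * d,
        (y (π i) : ℝ) = x ⟨i.1, h⟩ := by
      intro i h
      rw [hx i, Finset.sum_eq_single (⟨i.1, h⟩ : Fin (2 * d))]
      · rw [hA]; simp [h]
      · intro j' _ hne
        rw [hA]
        have hne' : ¬ ((i : ℕ) = (j' : ℕ)) := by
          intro he; exact hne (Fin.ext he.symm)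
        simp [h, hne']
      · simp
    -- last row
    set F1 : Finset (Fin (2 * d)) := Finset.univ.filter (fun j => (j : ℕ) < d) with hF1
    set F2 : Finset (Fin (2 * d)) := Finset.univ.filter (fun j => ¬ (j : ℕ) < d) with hF2
    have hlast : (y (π ⟨2 * d, by omega⟩) : ℝ) =
        (∑ j ∈ F1, x j) - (∑ j ∈ F2, x j) := by
      rw [hx ⟨2 * d, by omega⟩,
        ← Finset.sum_filter_add_sum_filter_not Finset.univ (fun j : Fin (2 * d) => (j : ℕ) < d)]
      have e1 : ∀ j ∈ F1, A ⟨2 * d, by omega⟩ j * x j = x j := by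
        intro j hj
        rw [hF1, Finset.mem_filter] at hj
        rw [hA]
        simp [hj.2]
      have e2 : ∀ j ∈ F2, A ⟨2 * d, by omega⟩ j * x j = - x j := by
        intro j hj
        rw [hF2, Finset.mem_filter] at hj
        rw [hA]
        simp [hj.2]
      rw [Finset.sum_congr rfl e1, Finset.sum_congr rfl e2, Finset.sum_neg_distrib,
        sub_eq_add_neg]
    -- the subset
    set S : Finset (Fin d) := Finset.univ.filter
      (fun k : Fin d => ((π.symm ⟨k.1, by omega⟩ : Fin (2 * d + 1)) : ℕ) < d) with hSdef
    set B1 : Finset (Fin (2 * d + 1)) := Finset.univ.filter (fun i => (i : ℕ) < d) with hB1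
    set B2 : Finset (Fin (2 * d + 1)) :=
      Finset.univ.filter (fun i => ¬ (i : ℕ) < d ∧ (i : ℕ) < 2 * d) with hB2
    -- P = sum over S
    have hP : ∑ i ∈ B1, y (π i) = ∑ k ∈ S, b k := by
      have hz : ∑ i ∈ B1.filter (fun i : Fin (2*d+1) => ¬ ((π i : Fin (2*d+1)) : ℕ) < d),
          y (π i) = 0 := by
        refine Finset.sum_eq_zero ?_
        intro i hi
        rw [Finset.mem_filter] at hi
        rw [hy, dif_neg hi.2]
      rw [← Finset.sum_filter_add_sum_filter_not B1 (fun i : Fin (2*d+1) =>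
          ((π i : Fin (2*d+1)) : ℕ) < d) (fun i => y (π i)), hz, add_zero]
      refine Finset.sum_bij' (fun i hi => (⟨(π i : Fin (2*d+1)).1, by
          rw [Finset.mem_filter] at hi; exact hi.2⟩ : Fin d))
        (fun k hk => π.symm ⟨k.1, by omega⟩) ?_ ?_ ?_ ?_ ?_
      · intro i hi
        rw [Finset.mem_filter] at hi
        rw [hSdef, Finset.mem_filter]
        refine ⟨Finset.mem_univ _, ?_⟩
        have he : (⟨(π i : Fin (2*d+1)).1, by omega⟩ : Fin (2*d+1)) = π i := Fin.ext rfl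
        rw [he, Equiv.symm_apply_apply]
        rw [hB1, Finset.mem_filter] at hi
        exact hi.1.2
      · intro k hk
        rw [hSdef, Finset.mem_filter] at hk
        rw [Finset.mem_filter, hB1, Finset.mem_filter]
        refine ⟨⟨Finset.mem_univ _, hk.2⟩, ?_⟩
        rw [Equiv.apply_symm_apply]
        exact k.2
      · intro i hi
        exact Equiv.symm_apply_apply π i
      · intro k hk
        ext
        simp
      · intro i hi
        rw [Finset.mem_filter] at hi
        rw [hy, dif_pos hi.2]
    -- partition of the total sum
    have hsplit : ∀ g : Fin (2 * d + 1) → ℤ,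
        ∑ i, g i = ∑ i ∈ B1, g i + ∑ i ∈ B2, g i + g ⟨2 * d, by omega⟩ := by
      intro g
      rw [← Finset.sum_filter_add_sum_filter_not Finset.univ
        (fun i : Fin (2 * d + 1) => (i : ℕ) < d) g, ← hB1,
        ← Finset.sum_filter_add_sum_filter_not
          (Finset.univ.filter (fun i : Fin (2 * d + 1) => ¬ (i : ℕ) < d))
          (fun i : Fin (2 * d + 1) => (i : ℕ) < 2 * d) g]
      have e1 : (Finset.univ.filter (fun i : Fin (2 * d + 1) => ¬ (i : ℕ) < d)).filter
          (fun i : Fin (2 * d + 1) => (i : ℕ) < 2 * d) = B2 := by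
        rw [hB2]; ext i
        simp only [Finset.mem_filter, Finset.mem_univ, true_and]
      have e2 : (Finset.univ.filter (fun i : Fin (2 * d + 1) => ¬ (i : ℕ) < d)).filter
          (fun i : Fin (2 * d + 1) => ¬ (i : ℕ) < 2 * d) = {(⟨2 * d, by omega⟩ : Fin (2 * d + 1))} := by
        ext i
        simp only [Finset.mem_filter, Finset.mem_univ, true_and, Finset.mem_singleton,
          Fin.ext_iff]
        have := i.2
        omega
      rw [e1, e2, Finset.sum_singleton, add_assoc]
    have htotal : ∑ i ∈ B1, y (π i) + ∑ i ∈ B2, y (π i) + y (π ⟨2 * d, by omega⟩)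
        = ∑ k, b k := by
      rw [← hsplit (fun i => y (π i))]
      rw [Equiv.sum_comp π y]
      have hu : ∑ i : Fin (2 * d + 1), y i = ∑ i ∈ B1, y i := by
        refine (Finset.sum_subset (Finset.subset_univ _) ?_).symm
        intro i _ hi
        rw [hB1, Finset.mem_filter] at hi
        have hnd : ¬ (i : ℕ) < d := fun hlt => hi ⟨Finset.mem_univ i, hlt⟩
        rw [hy, dif_neg hnd]
      rw [hu]
      refine Finset.sum_bij' (fun i hi => (⟨i.1, by
          rw [hB1, Finset.mem_filter] at hi; exact hi.2⟩ : Fin d))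
        (fun k _ => (⟨k.1, by omega⟩ : Fin (2 * d + 1))) ?_ ?_ ?_ ?_ ?_
      · intro i hi; exact Finset.mem_univ _
      · intro k _
        rw [hB1, Finset.mem_filter]
        exact ⟨Finset.mem_univ _, k.2⟩
      · intro i hi; ext; rfl
      · intro k _; ext; rfl
      · intro i hi
        rw [hB1, Finset.mem_filter] at hi
        rw [hy, dif_pos hi.2]
    -- transfer hlast to ℤ sums
    have hF1B1 : ∑ j ∈ F1, x j = ((∑ i ∈ B1, y (π i) : ℤ) : ℝ) := by
      push_cast
      refine Finset.sum_bij' (fun j _ => (⟨j.1, by omega⟩ : Fin (2 * d + 1)))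
        (fun i hi => (⟨i.1, by
          rw [hB1, Finset.mem_filter] at hi; omega⟩ : Fin (2 * d))) ?_ ?_ ?_ ?_ ?_
      · intro j hj
        rw [hF1, Finset.mem_filter] at hj
        rw [hB1, Finset.mem_filter]
        exact ⟨Finset.mem_univ _, hj.2⟩
      · intro i hi
        rw [hB1, Finset.mem_filter] at hi
        rw [hF1, Finset.mem_filter]
        exact ⟨Finset.mem_univ _, hi.2⟩
      · intro j _; ext; rfl
      · intro i _; ext; rfl
      · intro j _
        exact (hxval ⟨j.1, by omega⟩ j.2).symm
    have hF2B2 : ∑ j ∈ F2, x j = ((∑ i ∈ B2, y (π i) : ℤ) : ℝ) := by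
      push_cast
      refine Finset.sum_bij' (fun j _ => (⟨j.1, by omega⟩ : Fin (2 * d + 1)))
        (fun i hi => (⟨i.1, by
          rw [hB2, Finset.mem_filter] at hi; omega⟩ : Fin (2 * d))) ?_ ?_ ?_ ?_ ?_
      · intro j hj
        rw [hF2, Finset.mem_filter] at hj
        rw [hB2, Finset.mem_filter]
        exact ⟨Finset.mem_univ _, hj.2, j.2⟩
      · intro i hi
        rw [hB2, Finset.mem_filter] at hi
        rw [hF2, Finset.mem_filter]
        exact ⟨Finset.mem_univ _, hi.2.1⟩
      · intro j _; ext; rfl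
      · intro i _; ext; rfl
      · intro j _
        exact (hxval ⟨j.1, by omega⟩ j.2).symm
    have hlastZ : y (π ⟨2 * d, by omega⟩) =
        ∑ i ∈ B1, y (π i) - ∑ i ∈ B2, y (π i) := by
      have h := hlast
      rw [hF1B1, hF2B2] at h
      exact_mod_cast h
    refine ⟨S, ?_⟩
    have hcompl : ∑ k ∈ S, b k + ∑ k ∈ Sᶜ, b k = ∑ k, b k := S.sum_add_sum_compl b
    linarith [htotal, hP, hlastZ, hcompl]
  · rintro ⟨S, hS⟩
    set f : Fin (2 * d + 1) → Fin (2 * d + 1) := fun i =>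
      if h : (i : ℕ) < d then
        (if (⟨i.1, h⟩ : Fin d) ∈ S then i else ⟨i.1 + d, by omega⟩)
      else if h2 : (i : ℕ) < 2 * d then
        (if (⟨i.1 - d, by omega⟩ : Fin d) ∈ S then i else ⟨i.1 - d, by omega⟩)
      else i with hf
    have hinv : Function.Involutive f := by
      intro i
      by_cases h : (i : ℕ) < d
      · by_cases hs : (⟨i.1, h⟩ : Fin d) ∈ S
        · rw [hf]
          simp only [dif_pos h, if_pos hs]
        · have h1 : f i = ⟨i.1 + d, by omega⟩ := by
            rw [hf]; simp only [dif_pos h, if_neg hs]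
          rw [h1, hf]
          have h2 : ¬ (i.1 + d < d) := by omega
          have h3 : i.1 + d < 2 * d := by omega
          simp only [dif_neg h2, dif_pos h3]
          have h4 : (⟨i.1 + d - d, by omega⟩ : Fin d) = ⟨i.1, h⟩ := by
            ext; simp
          rw [h4, if_neg hs]
          ext
          simp
          try omega
      · by_cases h2 : (i : ℕ) < 2 * d
        · by_cases hs : (⟨i.1 - d, by omega⟩ : Fin d) ∈ S
          · rw [hf]
            simp only [dif_neg h, dif_pos h2, if_pos hs]
          · have h1 : f i = ⟨i.1 - d, by omega⟩ := by
              rw [hf]; simp only [dif_neg h, dif_pos h2, if_neg hs]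
            rw [h1, hf]
            have h3 : i.1 - d < d := by omega
            simp only [dif_pos h3]
            have h4 : (⟨i.1 - d, h3⟩ : Fin d) = ⟨i.1 - d, by omega⟩ := rfl
            rw [if_neg (h4 ▸ hs)]
            ext
            simp
            try omega
        · rw [hf]
          simp only [dif_neg h, dif_neg h2]
    refine ⟨hinv.toPerm f, fun j => (y (f ⟨j.1, by omega⟩) : ℝ), ?_⟩
    intro i
    have hπ : (hinv.toPerm f) i = f i := rfl
    rw [hπ]
    by_cases h : (i : ℕ) < 2 * d
    · rw [Finset.sum_eq_single (⟨i.1, h⟩ : Fin (2 * d))]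
      · rw [hA]
        simp only [h, if_true, if_pos rfl]
        rw [one_mul]
      · intro j' _ hne
        rw [hA]
        have hne' : ¬ ((i : ℕ) = (j' : ℕ)) := by
          intro he; exact hne (Fin.ext he.symm)
        simp [h, hne']
      · simp
    · -- last row
      have hfi : f i = i := by
        rw [hf]
        have h0 : ¬ (i : ℕ) < d := by omega
        simp only [dif_neg h0, dif_neg h]
      rw [hfi]
      have hyi : y i = 0 := by
        rw [hy, dif_neg (by omega : ¬ (i : ℕ) < d)]
      rw [hyi]
      have hrow : ∀ j : Fin (2 * d), A i j = if (j : ℕ) < d then 1 else -1 := by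
        intro j; rw [hA, if_neg h]
      rw [Finset.sum_congr rfl (fun j _ => by rw [hrow j])]
      rw [← Finset.sum_filter_add_sum_filter_not Finset.univ
        (fun j : Fin (2 * d) => (j : ℕ) < d)]
      have eA : ∑ j ∈ Finset.univ.filter (fun j : Fin (2 * d) => (j : ℕ) < d),
          (if (j : ℕ) < d then (1:ℝ) else -1) * y (f ⟨j.1, by omega⟩) =
          ∑ k ∈ S, (b k : ℝ) := by
        rw [← Finset.sum_filter_add_sum_filter_not
          (Finset.univ.filter (fun j : Fin (2 * d) => (j : ℕ) < d))
          (fun j : Fin (2 * d) => ∃ hj : (j : ℕ) < d, (⟨j.1, hj⟩ : Fin d) ∈ S)]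
        have z1 : ∑ j ∈ (Finset.univ.filter (fun j : Fin (2 * d) => (j : ℕ) < d)).filter
            (fun j : Fin (2 * d) => ¬ ∃ hj : (j : ℕ) < d, (⟨j.1, hj⟩ : Fin d) ∈ S),
            (if (j : ℕ) < d then (1:ℝ) else -1) * y (f ⟨j.1, by omega⟩) = 0 := by
          refine Finset.sum_eq_zero ?_
          intro j hj
          simp only [Finset.mem_filter, Finset.mem_univ, true_and] at hj
          obtain ⟨hjd, hns⟩ := hj
          have hns' : (⟨j.1, hjd⟩ : Fin d) ∉ S := fun hmem => hns ⟨hjd, hmem⟩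
          have : f ⟨j.1, by omega⟩ = ⟨j.1 + d, by omega⟩ := by
            simp only [hf]
            rw [dif_pos hjd, if_neg hns']
          rw [this, hy, dif_neg (by omega : ¬ (j.1 + d < d))]
          simp
        rw [z1, add_zero]
        refine Finset.sum_bij' (fun j hj => (⟨j.1, by
            simp only [Finset.mem_filter, Finset.mem_univ, true_and] at hj
            exact hj.1⟩ : Fin d))
          (fun k _ => (⟨k.1, by omega⟩ : Fin (2 * d))) ?_ ?_ ?_ ?_ ?_
        · intro j hj
          simp only [Finset.mem_filter, Finset.mem_univ, true_and] at hj
          obtain ⟨hjd, hjd', hmem⟩ := hj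
          exact hmem
        · intro k hk
          simp only [Finset.mem_filter, Finset.mem_univ, true_and]
          exact ⟨k.2, k.2, by simpa using hk⟩
        · intro j _; ext; rfl
        · intro k _; ext; rfl
        · intro j hj
          simp only [Finset.mem_filter, Finset.mem_univ, true_and] at hj
          obtain ⟨hjd, hjd', hmem⟩ := hj
          have hmem' : (⟨j.1, hjd⟩ : Fin d) ∈ S := by simpa using hmem
          have : f ⟨j.1, by omega⟩ = ⟨j.1, by omega⟩ := by
            simp only [hf]
            rw [dif_pos hjd, if_pos hmem']
          rw [if_pos hjd, one_mul, this, hy, dif_pos (by exact hjd :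
            ((⟨j.1, by omega⟩ : Fin (2*d+1)) : ℕ) < d)]
      have eB : ∑ j ∈ Finset.univ.filter (fun j : Fin (2 * d) => ¬ (j : ℕ) < d),
          (if (j : ℕ) < d then (1:ℝ) else -1) * y (f ⟨j.1, by omega⟩) =
          - ∑ k ∈ Sᶜ, (b k : ℝ) := by
        rw [← Finset.sum_neg_distrib]
        rw [← Finset.sum_filter_add_sum_filter_not
          (Finset.univ.filter (fun j : Fin (2 * d) => ¬ (j : ℕ) < d))
          (fun j : Fin (2 * d) => (⟨j.1 - d, by omega⟩ : Fin d) ∈ S)]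
        have z1 : ∑ j ∈ (Finset.univ.filter (fun j : Fin (2 * d) => ¬ (j : ℕ) < d)).filter
            (fun j : Fin (2 * d) => (⟨j.1 - d, by omega⟩ : Fin d) ∈ S),
            (if (j : ℕ) < d then (1:ℝ) else -1) * y (f ⟨j.1, by omega⟩) = 0 := by
          refine Finset.sum_eq_zero ?_
          intro j hj
          simp only [Finset.mem_filter, Finset.mem_univ, true_and] at hj
          obtain ⟨hjd, hmem⟩ := hj
          have : f ⟨j.1, by omega⟩ = ⟨j.1, by omega⟩ := by
            simp only [hf]
            have hnd : ¬ ((⟨j.1, by omega⟩ : Fin (2*d+1)) : ℕ) < d := hjd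
            have h2d : ((⟨j.1, by omega⟩ : Fin (2*d+1)) : ℕ) < 2 * d := j.2
            rw [dif_neg hnd, dif_pos h2d, if_pos (by simpa using hmem)]
          rw [this, hy, dif_neg (by exact hjd :
            ¬ ((⟨j.1, by omega⟩ : Fin (2*d+1)) : ℕ) < d)]
          simp
        rw [z1, zero_add]
        refine Finset.sum_bij' (fun j _ => (⟨j.1 - d, by omega⟩ : Fin d))
          (fun k _ => (⟨k.1 + d, by omega⟩ : Fin (2 * d))) ?_ ?_ ?_ ?_ ?_
        · intro j hj
          simp only [Finset.mem_filter, Finset.mem_univ, true_and] at hj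
          simpa using hj.2
        · intro k hk
          simp only [Finset.mem_filter, Finset.mem_univ, true_and]
          constructor
          · omega
          · have : (⟨k.1 + d - d, by omega⟩ : Fin d) = k := by ext; simp
            rw [this]
            simpa using hk
        · intro j hj
          simp only [Finset.mem_filter, Finset.mem_univ, true_and] at hj
          ext; simp; omega
        · intro k _; ext; simp
        · intro j hj
          simp only [Finset.mem_filter, Finset.mem_univ, true_and] at hj
          obtain ⟨hjd, hmem⟩ := hj
          have hmem' : (⟨j.1 - d, by omega⟩ : Fin d) ∉ S := by simpa using hmem
          have hfj : f ⟨j.1, by omega⟩ = ⟨j.1 - d, by omega⟩ := by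
            simp only [hf]
            have hnd : ¬ ((⟨j.1, by omega⟩ : Fin (2*d+1)) : ℕ) < d := hjd
            have h2d : ((⟨j.1, by omega⟩ : Fin (2*d+1)) : ℕ) < 2 * d := j.2
            rw [dif_neg hnd, dif_pos h2d, if_neg hmem']
          rw [if_neg hjd, hfj, hy, dif_pos (by omega : j.1 - d < d)]
          push_cast
          ring_nf
      rw [eA, eB]
      have : ∑ k ∈ S, (b k : ℝ) = ∑ k ∈ Sᶜ, (b k : ℝ) := by exact_mod_cast hS
      rw [this]
      ring
end

section
/- For n ≥ 2, n! ≤ e·√n·(n/e)^n. -/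
theorem stmt_19 (n : ℕ) (hn : 2 ≤ n) :
    (Nat.factorial n : ℝ) ≤ Real.exp 1 * Real.sqrt n * ((n : ℝ) / Real.exp 1) ^ n := by
  obtain ⟨m, rfl⟩ : ∃ m, n = m + 1 := ⟨n - 1, by omega⟩
  have h1 : Stirling.stirlingSeq (m + 1) ≤ Stirling.stirlingSeq 1 := by
    have := Stirling.log_stirlingSeq'_antitone (Nat.zero_le m)
    simp only [Function.comp] at this
    have h0 := Stirling.stirlingSeq'_pos m
    have h01 := Stirling.stirlingSeq'_pos 0
    exact (Real.log_le_log_iff h0 h01).mp this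
  rw [Stirling.stirlingSeq_one] at h1
  set n := m + 1
  have hn1 : (1:ℝ) ≤ (n:ℝ) := by exact_mod_cast Nat.one_le_iff_ne_zero.mpr (by omega)
  have hpos : (0:ℝ) < Real.sqrt (2 * n) * ((n : ℝ) / Real.exp 1) ^ n := by positivity
  have h2 : (Nat.factorial n : ℝ) ≤
      Real.exp 1 / Real.sqrt 2 * (Real.sqrt (2 * n) * ((n : ℝ) / Real.exp 1) ^ n) := by
    have := (div_le_iff₀ hpos).mp h1
    simpa [Stirling.stirlingSeq] using this
  calc (Nat.factorial n : ℝ) ≤ _ := h2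
    _ = Real.exp 1 * Real.sqrt n * ((n : ℝ) / Real.exp 1) ^ n := by
        rw [Real.sqrt_mul (by norm_num)]
        have h2' : Real.sqrt 2 ≠ 0 := by positivity
        field_simp
end
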